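/- Let R be a commutative ring of characteristic 2 and T ∈ R. For N ≥ 1, consider the (N+1)×(N+1) matrix U over R whose first row is (T, 0, …, 0, 1+T), second row is (1+T, 0, …, 0, T), and whose rows 3 through N+1 are the standard shift: row k+1 has a 1 in column k−1 for k = 3, …, N+1 (i.e., U has the form of the Egervary dilation matrix). Then U is invertible, with inverse equal to its transpose, i.e., U is orthogonal: UᵀU = UUᵀ = I. -/

import Mathlib

open Matrix
/-- The Egervary dilation matrix over a ring of characteristic 2. -/
def egervaryU (R : Type*) [CommRing R] (N : ℕ) (T : R) :
    Matrix (Fin (N + 1)) (Fin (N + 1)) R :=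
  Matrix.of fun i j =>
    if (i : ℕ) = 0 ∧ (j : ℕ) = 0 then T
    else if (i : ℕ) = 0 ∧ (j : ℕ) = N then 1 + T
    else if (i : ℕ) = 1 ∧ (j : ℕ) = 0 then 1 + T
    else if (i : ℕ) = 1 ∧ (j : ℕ) = N then T
    else if 2 ≤ (i : ℕ) ∧ (j : ℕ) + 1 = (i : ℕ) then 1
    else 0

section Aux

variable {R : Type*} [CommRing R]

/-- ℕ-indexed version of the matrix entries. -/
def unat (T : R) (N i j : ℕ) : R :=
  if i = 0 ∧ j = 0 then T
  else if i = 0 ∧ j = N then 1 + T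
  else if i = 1 ∧ j = 0 then 1 + T
  else if i = 1 ∧ j = N then T
  else if 2 ≤ i ∧ j + 1 = i then 1
  else 0

lemma egervaryU_eq_unat (N : ℕ) (T : R) (i j : Fin (N + 1)) :
    egervaryU R N T i j = unat T N (i : ℕ) (j : ℕ) := rfl

lemma sum_shift (a b M : ℕ) (c d : R) :
    ∑ n ∈ Finset.range M, (if a = n + 2 then c else 0) * (if b = n + 2 then d else 0)
      = if a = b ∧ 2 ≤ a ∧ a ≤ M + 1 then c * d else 0 := by
  rcases Nat.lt_or_ge a 2 with h | h
  · rw [Finset.sum_eq_zero, if_neg (by omega)]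
    intro n _; rw [if_neg (by omega), zero_mul]
  · obtain ⟨p, rfl⟩ : ∃ p, a = p + 2 := ⟨a - 2, by omega⟩
    have key : ∀ n ∈ Finset.range M,
        (if p + 2 = n + 2 then c else 0) * (if b = n + 2 then d else 0)
          = if n = p then (if b = p + 2 then c * d else 0) else 0 := by
      intro n _
      rcases eq_or_ne n p with rfl | hne
      · simp
      · rw [if_neg (by omega), if_neg hne, zero_mul]
    rw [Finset.sum_congr rfl key, Finset.sum_ite_eq' (Finset.range M) p]
    simp only [Finset.mem_range]
    split_ifs with h1 h2 h3 h4 h5 <;> first | rfl | omega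

lemma col_dot [CharP R 2] (T : R) (M j k : ℕ) (hj : j ≤ M + 1) (hk : k ≤ M + 1) :
    ∑ n ∈ Finset.range (M + 2), unat T (M + 1) n j * unat T (M + 1) n k
      = if j = k then 1 else 0 := by
  have h2 : (2 : R) = 0 := by exact_mod_cast CharP.cast_eq_zero R 2
  rw [Finset.sum_range_succ', Finset.sum_range_succ']
  have hsh : ∀ n, unat T (M + 1) (n + 1 + 1) j * unat T (M + 1) (n + 1 + 1) k
      = (if j + 1 = n + 2 then (1 : R) else 0) * (if k + 1 = n + 2 then (1 : R) else 0) := by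
    intro n
    simp only [unat]
    have h0 : ¬ (n + 1 + 1 = 0) := by omega
    have h1 : ¬ (n + 1 + 1 = 1) := by omega
    have h2' : 2 ≤ n + 1 + 1 := by omega
    simp [h0, h1, h2']
  simp only [hsh]
  rw [sum_shift]
  have hj0 : unat T (M + 1) 0 j = if j = 0 then T else if j = M + 1 then 1 + T else 0 := by
    simp [unat]
  have hj1 : unat T (M + 1) (0 + 1) j
      = if j = 0 then 1 + T else if j = M + 1 then T else 0 := by
    simp [unat]
  have hk0 : unat T (M + 1) 0 k = if k = 0 then T else if k = M + 1 then 1 + T else 0 := by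
    simp [unat]
  have hk1 : unat T (M + 1) (0 + 1) k
      = if k = 0 then 1 + T else if k = M + 1 then T else 0 := by
    simp [unat]
  rw [hj0, hj1, hk0, hk1]
  by_cases e1 : j = 0 <;> by_cases e2 : j = M + 1 <;>
    by_cases e3 : k = 0 <;> by_cases e4 : k = M + 1 <;>
    by_cases e5 : j = k <;>
    simp only [e1, e2, e3, e4, e5, if_true, if_false, if_pos, if_neg, ite_true, ite_false] <;>
    first
      | omega
      | (split_ifs <;> first | linear_combination (T ^ 2 + T) * h2 | linear_combination (T + T ^ 2) * h2 | ring1 | omega | (exfalso; omega) | (exfalso; simp_all <;> omega))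

lemma row_dot [CharP R 2] (T : R) (M i k : ℕ) (hi : i ≤ M + 1) (hk : k ≤ M + 1) :
    ∑ j ∈ Finset.range (M + 2), unat T (M + 1) i j * unat T (M + 1) k j
      = if i = k then 1 else 0 := by
  have h2 : (2 : R) = 0 := by exact_mod_cast CharP.cast_eq_zero R 2
  rw [Finset.sum_range_succ, Finset.sum_range_succ']
  have key : ∀ n ∈ Finset.range M,
      unat T (M + 1) i (n + 1) * unat T (M + 1) k (n + 1)
        = (if i = n + 2 then (1 : R) else 0) * (if k = n + 2 then (1 : R) else 0) := by
    intro n hn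
    rw [Finset.mem_range] at hn
    have hmid : ∀ m, m ≤ M + 1 → unat T (M + 1) m (n + 1) = if m = n + 2 then (1 : R) else 0 := by
      intro m hm
      simp only [unat]
      have hne0 : ¬ (n + 1 = 0) := by omega
      have hneN : ¬ (n + 1 = M + 1) := by omega
      have : (2 ≤ m ∧ n + 1 + 1 = m) ↔ m = n + 2 := by omega
      simp [hne0, hneN, this, show ¬ (n = M) by omega]
    rw [hmid i hi, hmid k hk]
  rw [Finset.sum_congr rfl key, sum_shift]
  have h0 : ∀ m, m ≤ M + 1 → unat T (M + 1) m 0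
      = if m = 0 then T else if m = 1 then 1 + T else 0 := by
    intro m hm
    simp only [unat]
    have : ¬ ((0 : ℕ) + 1 = m ∧ 2 ≤ m) := by omega
    have hN0 : ¬ ((0 : ℕ) = M + 1) := by omega
    by_cases e0 : m = 0
    · simp [e0]
    · by_cases e1 : m = 1
      · simp [e0, e1, hN0]
      · have : ¬ (2 ≤ m ∧ 0 + 1 = m) := by omega
        simp [e0, e1, hN0, this]
  have hN : ∀ m, m ≤ M + 1 → unat T (M + 1) m (M + 1)
      = if m = 0 then 1 + T else if m = 1 then T else 0 := by
    intro m hm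
    simp only [unat]
    have hN0 : ¬ ((M + 1 : ℕ) = 0) := by omega
    by_cases e0 : m = 0
    · simp [e0, hN0]
    · by_cases e1 : m = 1
      · simp [e0, e1, hN0]
      · have : ¬ (2 ≤ m ∧ M + 1 + 1 = m) := by omega
        simp [e0, e1, hN0, this]
  rw [h0 i hi, h0 k hk, hN i hi, hN k hk]
  by_cases e1 : i = 0 <;> by_cases e2 : i = 1 <;>
    by_cases e3 : k = 0 <;> by_cases e4 : k = 1 <;>
    by_cases e5 : i = k <;>
    simp only [e1, e2, e3, e4, e5, if_true, if_false, ite_true, ite_false] <;>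
    first
      | omega
      | (split_ifs <;> first | linear_combination (T ^ 2 + T) * h2 | linear_combination (T + T ^ 2) * h2 | ring1 | omega | (exfalso; omega) | (exfalso; simp_all <;> omega))

end Aux

theorem egervary_orthogonal (R : Type*) [CommRing R] [CharP R 2]
    (T : R) (N : ℕ) (hN : 1 ≤ N) :
    (egervaryU R N T)ᵀ * egervaryU R N T = 1 ∧
    egervaryU R N T * (egervaryU R N T)ᵀ = 1 := by
  obtain ⟨M, rfl⟩ : ∃ M, N = M + 1 := ⟨N - 1, by omega⟩
  constructor <;> ext i j
  · rw [Matrix.mul_apply]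
    simp only [Matrix.transpose_apply, egervaryU_eq_unat]
    rw [Fin.sum_univ_eq_sum_range (fun n => unat T (M + 1) n (i : ℕ) * unat T (M + 1) n (j : ℕ))]
    rw [col_dot T M (i : ℕ) (j : ℕ) (by omega) (by omega)]
    rw [Matrix.one_apply]
    simp [Fin.ext_iff]
  · rw [Matrix.mul_apply]
    simp only [Matrix.transpose_apply, egervaryU_eq_unat]
    rw [Fin.sum_univ_eq_sum_range (fun n => unat T (M + 1) (i : ℕ) n * unat T (M + 1) (j : ℕ) n)]
    rw [row_dot T M (i : ℕ) (j : ℕ) (by omega) (by omega)]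
    rw [Matrix.one_apply]
    simp [Fin.ext_iff]
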